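/- Let g ≥ 1 and let F(x,y) = x + y + Σ_{ℓ=1}^g a_ℓ x^{−ℓ+1} + x^{−2g+1} y^{−1} be a Laurent polynomial over ℂ. If the affine curve F = 0 in (ℂ*)² has exactly g singular points, then each singular point is a node (i.e. the Hessian of F is nondegenerate there). -/

import Mathlib

open Finset Polynomial

-- generic sum derivative
lemma sumD (g : ℕ) (A : ℕ → ℂ) (e : ℕ → ℤ) {x : ℂ} (hx : x ≠ 0) :
    HasDerivAt (fun x : ℂ => ∑ ℓ ∈ Finset.Icc 1 g, A ℓ * x ^ e ℓ)
      (∑ ℓ ∈ Finset.Icc 1 g, (A ℓ * ((e ℓ : ℤ) : ℂ)) * x ^ (e ℓ - 1)) x := by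
  apply HasDerivAt.fun_sum
  intro ℓ _
  have := (hasDerivAt_zpow (e ℓ) x (Or.inl hx)).const_mul (A ℓ)
  refine this.congr_deriv ?_
  ring

lemma zpow_helper (u : ℂ) (hu : u ≠ 0) (m n r : ℤ) (h : m + n = r) :
    u ^ m * u ^ n = u ^ r := by rw [← zpow_add₀ hu, h]

noncomputable def Paux (g : ℕ) (a : ℕ → ℂ) : Polynomial ℂ :=
  C (2*(g:ℂ)+1) * X^g + ∑ ℓ ∈ Finset.Icc 1 g, C ((2*(g:ℂ)+1-2*(ℓ:ℂ)) * a ℓ) * X^(g-ℓ)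

lemma Paux_coeff_g (g : ℕ) (hg : 1 ≤ g) (a : ℕ → ℂ) : (Paux g a).coeff g = 2*(g:ℂ)+1 := by
  rw [Paux, coeff_add, finset_sum_coeff]
  rw [Finset.sum_eq_zero, coeff_C_mul, coeff_X_pow, if_pos rfl]
  · ring
  · intro ℓ hℓ
    rw [coeff_C_mul, coeff_X_pow, if_neg, mul_zero]
    simp only [Finset.mem_Icc] at hℓ
    omega

lemma Paux_natDegree (g : ℕ) (hg : 1 ≤ g) (a : ℕ → ℂ) : (Paux g a).natDegree = g := by
  apply le_antisymm
  · apply Polynomial.natDegree_add_le_of_degree_le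
    · exact natDegree_C_mul_le _ _ |>.trans (by simp)
    · apply Polynomial.natDegree_sum_le_of_forall_le
      intro ℓ hℓ
      exact (natDegree_C_mul_X_pow_le _ _).trans (by omega)
  · apply Polynomial.le_natDegree_of_ne_zero
    rw [Paux_coeff_g g hg a]
    have : ((2*g+1 : ℕ) : ℂ) ≠ 0 := Nat.cast_ne_zero.2 (by omega)
    push_cast at this
    convert this using 2

lemma Paux_ne_zero (g : ℕ) (hg : 1 ≤ g) (a : ℕ → ℂ) : Paux g a ≠ 0 := by
  intro h
  have := Paux_coeff_g g hg a
  rw [h, coeff_zero] at this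
  have h2 : ((2*g+1 : ℕ) : ℂ) ≠ 0 := Nat.cast_ne_zero.2 (by omega)
  push_cast at h2
  exact h2 this.symm

lemma R1 (g : ℕ) (a : ℕ → ℂ) {u : ℂ} (hu : u ≠ 0) :
    (Paux g a).eval u = (2*(g:ℂ)+1) * u^g
      + (2*(g:ℂ)-1) * u ^ ((g:ℤ)-1) * (∑ ℓ ∈ Finset.Icc 1 g, a ℓ * u ^ (-(ℓ:ℤ)+1))
      + 2 * u ^ ((g:ℤ)) * (∑ ℓ ∈ Finset.Icc 1 g, (a ℓ * ((-(ℓ:ℤ)+1 : ℤ) : ℂ)) * u ^ (-(ℓ:ℤ)+1-1)) := by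
  rw [Paux, eval_add, eval_mul, eval_C, eval_pow, eval_X, eval_finset_sum]
  rw [Finset.mul_sum, Finset.mul_sum, add_assoc, ← Finset.sum_add_distrib]
  congr 1
  apply Finset.sum_congr rfl
  intro ℓ hℓ
  simp only [Finset.mem_Icc] at hℓ
  rw [eval_mul, eval_C, eval_pow, eval_X]
  have e0 : (u:ℂ)^(g-ℓ) = u ^ ((g:ℤ)-(ℓ:ℤ)) := by
    rw [← zpow_natCast]; congr 1; omega
  have e1 : u ^ ((g:ℤ)-1) * u ^ (-(ℓ:ℤ)+1) = u ^ ((g:ℤ)-(ℓ:ℤ)) :=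
    zpow_helper u hu _ _ _ (by ring)
  have e2 : u ^ ((g:ℤ)) * u ^ (-(ℓ:ℤ)+1-1) = u ^ ((g:ℤ)-(ℓ:ℤ)) :=
    zpow_helper u hu _ _ _ (by ring)
  rw [e0]
  push_cast
  linear_combination (-(2*(g:ℂ)-1) * a ℓ) * e1 + (-2 * (a ℓ * (-(ℓ:ℂ)+1))) * e2

lemma R2 (g : ℕ) (a : ℕ → ℂ) {u : ℂ} (hu : u ≠ 0) :
    (Paux g a).derivative.eval u = (2*(g:ℂ)+1) * ((g:ℂ) * u^(g-1))
      + 2 * u ^ ((g:ℤ)) * (∑ ℓ ∈ Finset.Icc 1 g,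
          ((a ℓ * ((-(ℓ:ℤ)+1 : ℤ) : ℂ)) * ((-(ℓ:ℤ)+1-1 : ℤ) : ℂ)) * u ^ (-(ℓ:ℤ)+1-1-1))
      + (4*(g:ℂ)-1) * u ^ ((g:ℤ)-1) * (∑ ℓ ∈ Finset.Icc 1 g,
          (a ℓ * ((-(ℓ:ℤ)+1 : ℤ) : ℂ)) * u ^ (-(ℓ:ℤ)+1-1))
      + (2*(g:ℂ)-1) * ((g:ℂ)-1) * u ^ ((g:ℤ)-2) * (∑ ℓ ∈ Finset.Icc 1 g,
          a ℓ * u ^ (-(ℓ:ℤ)+1)) := by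
  rw [Paux]
  simp only [derivative_add, derivative_sum, derivative_C_mul, derivative_X_pow, eval_add,
    eval_finset_sum, eval_mul, eval_C, eval_pow, eval_X, eval_natCast]
  have perterm : ∀ ℓ ∈ Finset.Icc 1 g,
      (2*(g:ℂ)+1-2*(ℓ:ℂ)) * a ℓ * (((g-ℓ : ℕ):ℂ) * u ^ (g-ℓ-1))
      = 2 * u ^ ((g:ℤ)) * (((a ℓ * ((-(ℓ:ℤ)+1 : ℤ) : ℂ)) * ((-(ℓ:ℤ)+1-1 : ℤ) : ℂ)) * u ^ (-(ℓ:ℤ)+1-1-1))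
      + (4*(g:ℂ)-1) * u ^ ((g:ℤ)-1) * ((a ℓ * ((-(ℓ:ℤ)+1 : ℤ) : ℂ)) * u ^ (-(ℓ:ℤ)+1-1))
      + (2*(g:ℂ)-1) * ((g:ℂ)-1) * u ^ ((g:ℤ)-2) * (a ℓ * u ^ (-(ℓ:ℤ)+1)) := by
    intro ℓ hℓ
    simp only [Finset.mem_Icc] at hℓ
    have hc : ((g-ℓ : ℕ):ℂ) = (g:ℂ)-(ℓ:ℂ) := by
      rw [Nat.cast_sub hℓ.2]
    have e1 : u ^ ((g:ℤ)) * u ^ (-(ℓ:ℤ)+1-1-1) = u ^ ((g:ℤ)-(ℓ:ℤ)-1) :=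
      zpow_helper u hu _ _ _ (by ring)
    have e2 : u ^ ((g:ℤ)-1) * u ^ (-(ℓ:ℤ)+1-1) = u ^ ((g:ℤ)-(ℓ:ℤ)-1) :=
      zpow_helper u hu _ _ _ (by ring)
    have e3 : u ^ ((g:ℤ)-2) * u ^ (-(ℓ:ℤ)+1) = u ^ ((g:ℤ)-(ℓ:ℤ)-1) :=
      zpow_helper u hu _ _ _ (by ring)
    rcases Nat.lt_or_ge ℓ g with h | h
    · have e0 : u ^ (g-ℓ-1 : ℕ) = u ^ ((g:ℤ)-(ℓ:ℤ)-1) := by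
        rw [← zpow_natCast]; congr 1; omega
      rw [hc, e0]
      push_cast
      linear_combination (-2 * ((a ℓ * (-(ℓ:ℂ)+1)) * (-(ℓ:ℂ)+1-1))) * e1
        + (-(4*(g:ℂ)-1) * (a ℓ * (-(ℓ:ℂ)+1))) * e2
        + (-(2*(g:ℂ)-1) * ((g:ℂ)-1) * a ℓ) * e3
    · have hlg : ℓ = g := le_antisymm hℓ.2 h
      subst hlg
      rw [hc]
      push_cast
      linear_combination (-2 * ((a ℓ * (-(ℓ:ℂ)+1)) * (-(ℓ:ℂ)+1-1))) * e1
        + (-(4*(ℓ:ℂ)-1) * (a ℓ * (-(ℓ:ℂ)+1))) * e2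
        + (-(2*(ℓ:ℂ)-1) * ((ℓ:ℂ)-1) * a ℓ) * e3
  rw [Finset.sum_congr rfl perterm]
  rw [Finset.sum_add_distrib, Finset.sum_add_distrib, ← Finset.mul_sum, ← Finset.mul_sum,
    ← Finset.mul_sum]
  ring

section PointLemmas
variable (g : ℕ) (a : ℕ → ℂ) {u v : ℂ}

lemma hk0' (hv : v ≠ 0) (h2 : 1 + u ^ (-(2*(g:ℤ))+1) * (-(v^2)⁻¹) = 0) :
    u ^ (-(2*(g:ℤ))+1) = v^2 := by
  field_simp at h2
  linear_combination -h2

lemma s0eq (hu : u ≠ 0) (hv : v ≠ 0)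
    (h0 : u + v + (∑ ℓ ∈ Finset.Icc 1 g, a ℓ * u ^ (-(ℓ:ℤ)+1)) + u ^ (-(2*(g:ℤ))+1) * v⁻¹ = 0)
    (h2 : 1 + u ^ (-(2*(g:ℤ))+1) * (-(v^2)⁻¹) = 0) :
    (∑ ℓ ∈ Finset.Icc 1 g, a ℓ * u ^ (-(ℓ:ℤ)+1)) = -u - 2*v := by
  rw [hk0' g hv h2] at h0
  have hvv : v^2 * v⁻¹ = v := by field_simp [pow_two]
  linear_combination h0 - hvv

lemma s1eq (hu : u ≠ 0) (hv : v ≠ 0)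
    (h1 : 1 + (∑ ℓ ∈ Finset.Icc 1 g, (a ℓ * ((-(ℓ:ℤ)+1 : ℤ) : ℂ)) * u ^ (-(ℓ:ℤ)+1-1))
        + (((-(2*(g:ℤ))+1 : ℤ) : ℂ) * u ^ (-(2*(g:ℤ))+1-1)) * v⁻¹ = 0)
    (h2 : 1 + u ^ (-(2*(g:ℤ))+1) * (-(v^2)⁻¹) = 0) :
    (∑ ℓ ∈ Finset.Icc 1 g, (a ℓ * ((-(ℓ:ℤ)+1 : ℤ) : ℂ)) * u ^ (-(ℓ:ℤ)+1-1))
      = -1 - (-(2*(g:ℂ))+1) * v * u⁻¹ := by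
  rw [zpow_sub_one₀ hu, hk0' g hv h2] at h1
  push_cast at h1 ⊢
  have hvv : v^2 * v⁻¹ = v := by field_simp [pow_two]
  linear_combination h1 - (-(2*(g:ℂ))+1) * u⁻¹ * hvv

lemma eval_zero (hg : 1 ≤ g) (hu : u ≠ 0) (hv : v ≠ 0)
    (h0 : u + v + (∑ ℓ ∈ Finset.Icc 1 g, a ℓ * u ^ (-(ℓ:ℤ)+1)) + u ^ (-(2*(g:ℤ))+1) * v⁻¹ = 0)
    (h1 : 1 + (∑ ℓ ∈ Finset.Icc 1 g, (a ℓ * ((-(ℓ:ℤ)+1 : ℤ) : ℂ)) * u ^ (-(ℓ:ℤ)+1-1))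
        + (((-(2*(g:ℤ))+1 : ℤ) : ℂ) * u ^ (-(2*(g:ℤ))+1-1)) * v⁻¹ = 0)
    (h2 : 1 + u ^ (-(2*(g:ℤ))+1) * (-(v^2)⁻¹) = 0) :
    (Paux g a).eval u = 0 := by
  rw [R1 g a hu, s0eq g a hu hv h0 h2, s1eq g a hu hv h1 h2,
    zpow_sub_one₀ hu, zpow_natCast u g]
  field_simp
  ring
end PointLemmas

lemma simple_roots {P : Polynomial ℂ} {T : Finset ℂ} (hPne : P ≠ 0)
    (hdeg : P.natDegree = T.card) (hroots : ∀ t ∈ T, P.eval t = 0)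
    (hder : P.derivative ≠ 0) :
    ∀ t ∈ T, P.derivative.eval t ≠ 0 := by
  have hle : T.val ≤ P.roots := by
    rw [Multiset.le_iff_count]
    intro x
    by_cases hx : x ∈ T
    · calc T.val.count x ≤ 1 := Multiset.nodup_iff_count_le_one.mp T.nodup x
        _ ≤ P.roots.count x := by
            rw [Polynomial.count_roots]
            exact (Polynomial.rootMultiplicity_pos hPne).mpr (hroots x hx)
    · rw [Multiset.count_eq_zero_of_notMem (by simpa using hx)]
      omega
  have heq : T.val = P.roots :=
    Multiset.eq_of_le_of_card_le hle (by
      calc Multiset.card P.roots ≤ P.natDegree := Polynomial.card_roots' P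
        _ = T.card := hdeg)
  intro t ht h0
  have h1 : P.rootMultiplicity t = 1 := by
    rw [← Polynomial.count_roots, ← heq]
    exact Multiset.count_eq_one_of_mem T.nodup ht
  have h2 := Polynomial.derivative_rootMultiplicity_of_root (p := P) (t := t) (hroots t ht)
  rw [h1] at h2
  have h3 : 0 < P.derivative.rootMultiplicity t :=
    (Polynomial.rootMultiplicity_pos hder).mpr h0
  omega

lemma hess_core (g : ℕ) (u v S1 S2 DP W : ℂ) (hu : u ≠ 0) (hv : v ≠ 0)
    (hs1 : S1 = -1 - (-(2*(g:ℂ))+1) * v * u⁻¹)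
    (hDP : DP = (2*(g:ℂ)+1) * ((g:ℂ) * (W * u⁻¹))
      + 2 * W * S2 + (4*(g:ℂ)-1) * (W * u⁻¹) * S1
      + (2*(g:ℂ)-1) * ((g:ℂ)-1) * (W * u⁻¹ * u⁻¹) * (-u - 2*v))
    (hzero : (S2 + ((((-(2*(g:ℤ))+1 : ℤ):ℂ)) * ((((-(2*(g:ℤ))+1-1 : ℤ)):ℂ) * (v^2 * u⁻¹ * u⁻¹))) * v⁻¹)
        * (v^2 * (2 * v / (v^2)^2))
      - ((((-(2*(g:ℤ))+1 : ℤ):ℂ) * (v^2 * u⁻¹)) * (-(v^2)⁻¹))^2 = 0) :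
    DP = 0 := by
  rw [hs1] at hDP
  push_cast at hzero
  field_simp at hzero hDP
  have hX : (2*S2*u^2 - (1-4*(g:ℂ)^2)*v) * (u^2*v^8) = 0 := by linear_combination (u^2*v^8) * hzero
  have hX0 : 2*S2*u^2 - (1-4*(g:ℂ)^2)*v = 0 := by
    rcases mul_eq_zero.mp hX with h | h
    · exact h
    · exact absurd h (mul_ne_zero (pow_ne_zero 2 hu) (pow_ne_zero 8 hv))
  have h5 : DP * (u * (u * u) * (u * u)) = 0 := by linear_combination u^3 * hDP + (W*u^3) * hX0
  rcases mul_eq_zero.mp h5 with h | h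
  · exact h
  · exact absurd h (by simp [hu])

section Derivs
variable (g : ℕ) (a : ℕ → ℂ)

lemma hdF_u (v : ℂ) {u : ℂ} (hu : u ≠ 0) :
    HasDerivAt (fun x : ℂ => x + v + (∑ ℓ ∈ Finset.Icc 1 g, a ℓ * x ^ (-(ℓ:ℤ)+1))
        + x ^ (-(2*(g:ℤ))+1) * v⁻¹)
      (1 + (∑ ℓ ∈ Finset.Icc 1 g, (a ℓ * ((-(ℓ:ℤ)+1 : ℤ):ℂ)) * u ^ (-(ℓ:ℤ)+1-1))
        + (((-(2*(g:ℤ))+1 : ℤ):ℂ) * u ^ (-(2*(g:ℤ))+1-1)) * v⁻¹) u :=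
  (((hasDerivAt_id u).add_const v).add (sumD g a (fun ℓ => -(ℓ:ℤ)+1) hu)).add
    ((hasDerivAt_zpow (-(2*(g:ℤ))+1) u (Or.inl hu)).mul_const v⁻¹)

lemma hdF_uu (v : ℂ) {u : ℂ} (hu : u ≠ 0) :
    HasDerivAt (fun x : ℂ => 1 + (∑ ℓ ∈ Finset.Icc 1 g, (a ℓ * ((-(ℓ:ℤ)+1 : ℤ):ℂ)) * x ^ (-(ℓ:ℤ)+1-1))
        + (((-(2*(g:ℤ))+1 : ℤ):ℂ) * x ^ (-(2*(g:ℤ))+1-1)) * v⁻¹)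
      ((∑ ℓ ∈ Finset.Icc 1 g, ((a ℓ * ((-(ℓ:ℤ)+1 : ℤ):ℂ)) * ((-(ℓ:ℤ)+1-1 : ℤ):ℂ)) * u ^ (-(ℓ:ℤ)+1-1-1))
        + (((-(2*(g:ℤ))+1 : ℤ):ℂ) * (((-(2*(g:ℤ))+1-1 : ℤ):ℂ) * u ^ (-(2*(g:ℤ))+1-1-1))) * v⁻¹) u :=
  ((sumD g _ _ hu).const_add 1).add
    (((hasDerivAt_zpow (-(2*(g:ℤ))+1-1) u (Or.inl hu)).const_mul _).mul_const v⁻¹)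

lemma hdF_v (u Sc C : ℂ) {v : ℂ} (hv : v ≠ 0) :
    HasDerivAt (fun y : ℂ => u + y + Sc + C * y⁻¹) (1 + C * (-(v^2)⁻¹)) v :=
  (((hasDerivAt_id v).const_add u).add_const Sc).add ((hasDerivAt_inv hv).const_mul C)

lemma hdF_vv (C : ℂ) {v : ℂ} (hv : v ≠ 0) :
    HasDerivAt (fun y : ℂ => 1 + C * (-(y^2)⁻¹)) (C * (2*v/(v^2)^2)) v := by
  have h := (((hasDerivAt_pow 2 v).inv (pow_ne_zero 2 hv)).neg.const_mul C).const_add 1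
  refine h.congr_deriv ?_
  push_cast
  ring

lemma hdF_uv (c C : ℂ) {v : ℂ} (hv : v ≠ 0) :
    HasDerivAt (fun y : ℂ => c + C * y⁻¹) (C * (-(v^2)⁻¹)) v :=
  ((hasDerivAt_inv hv).const_mul C).const_add c

end Derivs

/-- Let `g ≥ 1` and `F(u,v) = u + v + Σ_{ℓ=1}^g a_ℓ u^{−ℓ+1} + u^{−2g+1} v^{−1}`.
If the affine curve `F = 0` in `(ℂ*)²` has exactly `g` singular points (points where `F` and
both partial derivatives vanish), then each singular point is a node, i.e. the Hessian
determinant `∂_{uu}F ∂_{vv}F − (∂_{uv}F)²` is nonzero there. -/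
theorem stmt4 (g : ℕ) (hg : 1 ≤ g) (a : ℕ → ℂ) (F : ℂ → ℂ → ℂ)
    (hF : ∀ u v : ℂ, F u v =
      u + v + (∑ ℓ ∈ Finset.Icc 1 g, a ℓ * u ^ (-(ℓ : ℤ) + 1)) +
        u ^ (-(2 * (g : ℤ)) + 1) * v⁻¹)
    (S : Set (ℂ × ℂ))
    (hS : S = {p : ℂ × ℂ | p.1 ≠ 0 ∧ p.2 ≠ 0 ∧ F p.1 p.2 = 0 ∧
      deriv (fun u => F u p.2) p.1 = 0 ∧ deriv (fun v => F p.1 v) p.2 = 0})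
    (hcard : S.ncard = g) :
    ∀ p ∈ S,
      deriv (fun u => deriv (fun u' => F u' p.2) u) p.1 *
          deriv (fun v => deriv (fun v' => F p.1 v') v) p.2 -
        (deriv (fun v => deriv (fun u => F u v) p.1) p.2) ^ 2 ≠ 0 := by
  classical
  have master : ∀ q ∈ S, (Paux g a).eval q.1 = 0 ∧
      (∑ ℓ ∈ Finset.Icc 1 g, a ℓ * q.1 ^ (-(ℓ:ℤ)+1)) = -q.1 - 2*q.2 := by
    intro q hq
    rw [hS] at hq
    obtain ⟨hu, hv, hF0, hd1, hd2⟩ := hq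
    have hfunu : (fun x => F x q.2) = (fun x : ℂ => x + q.2
        + (∑ ℓ ∈ Finset.Icc 1 g, a ℓ * x ^ (-(ℓ:ℤ)+1)) + x ^ (-(2*(g:ℤ))+1) * q.2⁻¹) :=
      funext fun x => hF x q.2
    have hfunv : (fun y => F q.1 y) = (fun y : ℂ => q.1 + y
        + (∑ ℓ ∈ Finset.Icc 1 g, a ℓ * q.1 ^ (-(ℓ:ℤ)+1)) + q.1 ^ (-(2*(g:ℤ))+1) * y⁻¹) :=
      funext fun y => hF q.1 y
    rw [hfunu, (hdF_u g a q.2 hu).deriv] at hd1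
    rw [hfunv, (hdF_v q.1 _ _ hv).deriv] at hd2
    rw [hF] at hF0
    exact ⟨eval_zero g a hg hu hv hF0 hd1 hd2, s0eq g a hu hv hF0 hd2⟩
  have hSfin : S.Finite := by
    by_contra h
    rw [Set.Infinite.ncard h] at hcard
    omega
  have hinj : Set.InjOn Prod.fst S := by
    intro q1 h1 q2 h2 he
    have m1 := (master q1 h1).2
    have m2 := (master q2 h2).2
    rw [he] at m1
    exact Prod.ext he (by linear_combination (m1 - m2)/2)
  set Tf : Finset ℂ := hSfin.toFinset.image Prod.fst with hTf
  have hTcard : Tf.card = g := by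
    rw [hTf, Finset.card_image_of_injOn (by rwa [Set.Finite.coe_toFinset])]
    rw [← Set.ncard_eq_toFinset_card S hSfin]
    exact hcard
  have hroots : ∀ t ∈ Tf, (Paux g a).eval t = 0 := by
    intro t ht
    rw [hTf, Finset.mem_image] at ht
    obtain ⟨q, hq, rfl⟩ := ht
    exact (master q (hSfin.mem_toFinset.mp hq)).1
  have hder : (Paux g a).derivative ≠ 0 := by
    intro h
    have := Polynomial.natDegree_eq_zero_of_derivative_eq_zero h
    rw [Paux_natDegree g hg a] at this
    omega
  have hD := simple_roots (Paux_ne_zero g hg a)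
    (by rw [Paux_natDegree g hg a, hTcard]) hroots hder
  intro p hp
  have hpS := hp
  rw [hS] at hp
  obtain ⟨hu, hv, hF0, hd1, hd2⟩ := hp
  have hfunu : (fun x => F x p.2) = (fun x : ℂ => x + p.2
      + (∑ ℓ ∈ Finset.Icc 1 g, a ℓ * x ^ (-(ℓ:ℤ)+1)) + x ^ (-(2*(g:ℤ))+1) * p.2⁻¹) :=
    funext fun x => hF x p.2
  have hfunv : (fun y => F p.1 y) = (fun y : ℂ => p.1 + y
      + (∑ ℓ ∈ Finset.Icc 1 g, a ℓ * p.1 ^ (-(ℓ:ℤ)+1)) + p.1 ^ (-(2*(g:ℤ))+1) * y⁻¹) :=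
    funext fun y => hF p.1 y
  rw [hfunu, (hdF_u g a p.2 hu).deriv] at hd1
  rw [hfunv, (hdF_v p.1 _ _ hv).deriv] at hd2
  rw [hF] at hF0
  have hA : deriv (fun x => deriv (fun x' => F x' p.2) x) p.1
      = (∑ ℓ ∈ Finset.Icc 1 g, ((a ℓ * ((-(ℓ:ℤ)+1 : ℤ):ℂ)) * ((-(ℓ:ℤ)+1-1 : ℤ):ℂ)) * p.1 ^ (-(ℓ:ℤ)+1-1-1))
        + (((-(2*(g:ℤ))+1 : ℤ):ℂ) * (((-(2*(g:ℤ))+1-1 : ℤ):ℂ) * p.1 ^ (-(2*(g:ℤ))+1-1-1))) * p.2⁻¹ := by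
    have ev : (fun x => deriv (fun x' => F x' p.2) x) =ᶠ[nhds p.1]
        (fun x => 1 + (∑ ℓ ∈ Finset.Icc 1 g, (a ℓ * ((-(ℓ:ℤ)+1 : ℤ):ℂ)) * x ^ (-(ℓ:ℤ)+1-1))
          + (((-(2*(g:ℤ))+1 : ℤ):ℂ) * x ^ (-(2*(g:ℤ))+1-1)) * p.2⁻¹) := by
      filter_upwards [eventually_ne_nhds hu] with x hx
      rw [show (fun x' => F x' p.2) = _ from funext fun t => hF t p.2]
      exact (hdF_u g a p.2 hx).deriv
    rw [ev.deriv_eq, (hdF_uu g a p.2 hu).deriv]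
  have hB : deriv (fun y => deriv (fun y' => F p.1 y') y) p.2
      = p.1 ^ (-(2*(g:ℤ))+1) * (2*p.2/(p.2^2)^2) := by
    have ev : (fun y => deriv (fun y' => F p.1 y') y) =ᶠ[nhds p.2]
        (fun y => 1 + p.1 ^ (-(2*(g:ℤ))+1) * (-(y^2)⁻¹)) := by
      filter_upwards [eventually_ne_nhds hv] with y hy
      rw [show (fun y' => F p.1 y') = _ from funext fun t => hF p.1 t]
      exact (hdF_v p.1 _ _ hy).deriv
    rw [ev.deriv_eq, (hdF_vv (p.1 ^ (-(2*(g:ℤ))+1)) hv).deriv]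
  have hC : deriv (fun y => deriv (fun x => F x y) p.1) p.2
      = ((((-(2*(g:ℤ))+1 : ℤ):ℂ) * p.1 ^ (-(2*(g:ℤ))+1-1)) * (-(p.2^2)⁻¹)) := by
    have ev : (fun y => deriv (fun x => F x y) p.1)
        = (fun y => 1 + (∑ ℓ ∈ Finset.Icc 1 g, (a ℓ * ((-(ℓ:ℤ)+1 : ℤ):ℂ)) * p.1 ^ (-(ℓ:ℤ)+1-1))
          + (((-(2*(g:ℤ))+1 : ℤ):ℂ) * p.1 ^ (-(2*(g:ℤ))+1-1)) * y⁻¹) := by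
      funext y
      rw [show (fun x => F x y) = _ from funext fun t => hF t y]
      exact (hdF_u g a y hu).deriv
    rw [ev, (hdF_uv _ _ hv).deriv]
  rw [hA, hB, hC]
  intro hzero
  have hDne := hD p.1 (by
    rw [hTf, Finset.mem_image]
    exact ⟨p, hSfin.mem_toFinset.mpr hpS, rfl⟩)
  apply hDne
  have hk0 := hk0' g hv hd2
  have hk1 : p.1 ^ (-(2*(g:ℤ))+1-1) = p.2^2 * p.1⁻¹ := by rw [zpow_sub_one₀ hu, hk0]
  have hk2 : p.1 ^ (-(2*(g:ℤ))+1-1-1) = p.2^2 * p.1⁻¹ * p.1⁻¹ := by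
    rw [zpow_sub_one₀ hu, hk1]
  rw [hk0, hk1, hk2] at hzero
  have hs1 := s1eq g a hu hv hd1 hd2
  have hs0 := s0eq g a hu hv hF0 hd2
  have hDP : (Paux g a).derivative.eval p.1 = (2*(g:ℂ)+1) * ((g:ℂ) * (p.1^g * p.1⁻¹))
      + 2 * (p.1^g) * (∑ ℓ ∈ Finset.Icc 1 g, ((a ℓ * ((-(ℓ:ℤ)+1 : ℤ):ℂ)) * ((-(ℓ:ℤ)+1-1 : ℤ):ℂ)) * p.1 ^ (-(ℓ:ℤ)+1-1-1))
      + (4*(g:ℂ)-1) * (p.1^g * p.1⁻¹) * (∑ ℓ ∈ Finset.Icc 1 g, (a ℓ * ((-(ℓ:ℤ)+1 : ℤ):ℂ)) * p.1 ^ (-(ℓ:ℤ)+1-1))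
      + (2*(g:ℂ)-1) * ((g:ℂ)-1) * (p.1^g * p.1⁻¹ * p.1⁻¹) * (-p.1 - 2*p.2) := by
    rw [R2 g a hu]
    rw [show p.1 ^ ((g:ℤ)) = p.1^g from zpow_natCast p.1 g]
    rw [show p.1 ^ ((g:ℤ)-1) = p.1^g * p.1⁻¹ from by rw [zpow_sub_one₀ hu, zpow_natCast]]
    rw [show p.1 ^ ((g:ℤ)-2) = p.1^g * p.1⁻¹ * p.1⁻¹ from by
      rw [show (g:ℤ)-2 = (g:ℤ)-1-1 from by ring, zpow_sub_one₀ hu, zpow_sub_one₀ hu, zpow_natCast]]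
    rw [show p.1 ^ (g-1) = p.1^g * p.1⁻¹ from by rw [pow_sub₀ p.1 hu hg, pow_one]]
    rw [hs0]
  exact hess_core g p.1 p.2 _ _ _ (p.1^g) hu hv hs1 hDP hzero
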